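/- Let ℒ ∈ ℝ^{n×n} be a symmetric tridiagonal matrix with nonpositive off-diagonal entries (ℒ_{i,j} = 0 for |i−j| ≥ 2 and ℒ_{i,i+1} = ℒ_{i+1,i} ≤ 0), and let v ∈ ℝⁿ be a strictly positive vector (v_i > 0 for all i) satisfying ℒ v = λ v for some λ ∈ ℝ. Define α_i = v_{i+1}/v_i for 1 ≤ i ≤ n−1, and let P = Diag(1/v_1, …, 1/v_n). Then: (i) (PℒP⁻¹)𝟏 = λ𝟏, where 𝟏 is the all-ones vector; (ii) λ = ℒ_{1,1} − α_1|ℒ_{1,2}|, and for 2 ≤ i ≤ n−1, λ = ℒ_{i,i} − α_{i−1}⁻¹|ℒ_{i,i−1}| − α_i|ℒ_{i,i+1}|; (iii) every Gershgorin disc left-end of PℒP⁻¹ equals λ, i.e., (PℒP⁻¹)_{ii} − Σ_{j≠i}|(PℒP⁻¹)_{ij}| = λ for every row i. -/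

import Mathlib

open Matrix

/-- equations (19)–(22) of the paper, GDPA for a tridiagonal path-graph
Laplacian: for a symmetric tridiagonal ℒ with nonpositive off-diagonal entries and a
strictly positive eigenvector v with ℒv = λv, with α_i = v_{i+1}/v_i and
P = Diag(1/v₁,…,1/vₙ): (i) (PℒP⁻¹)𝟏 = λ𝟏; (ii) λ = ℒ_{1,1} − α₁|ℒ_{1,2}| and
λ = ℒ_{i,i} − α_{i−1}⁻¹|ℒ_{i,i−1}| − α_i|ℒ_{i,i+1}| for 2 ≤ i ≤ n−1; (iii) every
Gershgorin disc left-end of PℒP⁻¹ equals λ. (Nodes 1,…,n are Fin values 0,…,n−1.) -/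
theorem stmt14 {n : ℕ} (hn : 2 ≤ n)
    (L : Matrix (Fin n) (Fin n) ℝ) (hsym : L.IsSymm)
    (htri : ∀ i j : Fin n, ((i : ℕ) + 2 ≤ (j : ℕ) ∨ (j : ℕ) + 2 ≤ (i : ℕ)) → L i j = 0)
    (hoff : ∀ i j : Fin n, (j : ℕ) = (i : ℕ) + 1 → L i j ≤ 0)
    (v : Fin n → ℝ) (hv : ∀ i, 0 < v i)
    (lam : ℝ) (heig : L.mulVec v = lam • v)
    (P : Matrix (Fin n) (Fin n) ℝ)
    (hP : P = Matrix.diagonal (fun i => (v i)⁻¹)) :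
    ((P * L * P⁻¹).mulVec (fun _ => (1 : ℝ)) = fun _ => lam)
    ∧ (lam = L ⟨0, by omega⟩ ⟨0, by omega⟩
        - (v ⟨1, by omega⟩ / v ⟨0, by omega⟩) * |L ⟨0, by omega⟩ ⟨1, by omega⟩|)
    ∧ (∀ (i : ℕ) (h1 : 1 ≤ i) (h2 : i + 1 < n),
        lam = L ⟨i, by omega⟩ ⟨i, by omega⟩
          - (v ⟨i, by omega⟩ / v ⟨i - 1, by omega⟩)⁻¹ * |L ⟨i, by omega⟩ ⟨i - 1, by omega⟩|
          - (v ⟨i + 1, by omega⟩ / v ⟨i, by omega⟩) * |L ⟨i, by omega⟩ ⟨i + 1, by omega⟩|)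
    ∧ (∀ i : Fin n,
        (P * L * P⁻¹) i i
          - ∑ j ∈ Finset.univ.filter (fun j => j ≠ i), |(P * L * P⁻¹) i j| = lam) := by
  -- off-diagonal entries are nonpositive
  have hneg : ∀ i j : Fin n, i ≠ j → L i j ≤ 0 := by
    intro i j hij
    rcases lt_trichotomy (i : ℕ) (j : ℕ) with h | h | h
    · by_cases hadj : (j : ℕ) = (i : ℕ) + 1
      · exact hoff i j hadj
      · exact le_of_eq (htri i j (Or.inl (by omega)))
    · exact absurd (Fin.ext h) hij
    · have hji : L j i ≤ 0 := by
        by_cases hadj : (i : ℕ) = (j : ℕ) + 1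
        · exact hoff j i hadj
        · exact le_of_eq (htri j i (Or.inl (by omega)))
      calc L i j = L j i := hsym.apply j i
        _ ≤ 0 := hji
  have hvne : ∀ i, v i ≠ 0 := fun i => (hv i).ne'
  have hPinv : P⁻¹ = Matrix.diagonal v := by
    apply Matrix.inv_eq_right_inv
    rw [hP, Matrix.diagonal_mul_diagonal]
    convert Matrix.diagonal_one using 2
    funext i
    exact inv_mul_cancel₀ (hvne i)
  have hM : ∀ i j, (P * L * P⁻¹) i j = (v i)⁻¹ * L i j * v j := by
    intro i j
    rw [hPinv, hP, Matrix.mul_diagonal, Matrix.diagonal_mul]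
  have he : ∀ i, ∑ j, L i j * v j = lam * v i := by
    intro i
    have := congrFun heig i
    simpa [Matrix.mulVec, dotProduct] using this
  refine ⟨?_, ?_, ?_, ?_⟩
  · funext i
    have : (P * L * P⁻¹).mulVec (fun _ => (1:ℝ)) i
        = ∑ j, (v i)⁻¹ * L i j * v j := by
      simp [Matrix.mulVec, dotProduct, hM]
    rw [this]
    have : ∑ j, (v i)⁻¹ * L i j * v j = (v i)⁻¹ * ∑ j, L i j * v j := by
      rw [Finset.mul_sum]
      exact Finset.sum_congr rfl fun x _ => by ring
    rw [this, he i, mul_comm lam (v i), inv_mul_cancel_left₀ (hvne i)]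
  · -- first row
    set i0 : Fin n := ⟨0, by omega⟩
    set i1 : Fin n := ⟨1, by omega⟩
    have h01 : i0 ≠ i1 := by simp [i0, i1, Fin.ext_iff]
    have hsum : ∑ j, L i0 j * v j = L i0 i0 * v i0 + L i0 i1 * v i1 := by
      rw [← Finset.sum_subset (Finset.subset_univ ({i0, i1} : Finset (Fin n)))]
      · rw [Finset.sum_pair h01]
      · intro x _ hx
        simp only [Finset.mem_insert, Finset.mem_singleton, not_or] at hx
        have h0 : (x : ℕ) ≠ 0 := by
          intro h; exact hx.1 (Fin.ext (by simp [i0, h]))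
        have h1 : (x : ℕ) ≠ 1 := by
          intro h; exact hx.2 (Fin.ext (by simp [i1, h]))
        have hx2 : (0 : ℕ) + 2 ≤ (x : ℕ) := by omega
        rw [htri i0 x (Or.inl hx2)]
        ring
    have key := he i0
    rw [hsum] at key
    have habs : |L i0 i1| = -L i0 i1 := abs_of_nonpos (hoff i0 i1 rfl)
    rw [habs]
    have hv0 := hvne i0
    field_simp
    linarith [key]
  · -- middle rows
    intro i h1 h2
    set im : Fin n := ⟨i - 1, by omega⟩
    set ii : Fin n := ⟨i, by omega⟩
    set ip : Fin n := ⟨i + 1, by omega⟩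
    have hmi : im ≠ ii := Fin.ne_of_val_ne (show i - 1 ≠ i by omega)
    have hmp : im ≠ ip := Fin.ne_of_val_ne (show i - 1 ≠ i + 1 by omega)
    have hip : ii ≠ ip := Fin.ne_of_val_ne (show i ≠ i + 1 by omega)
    have hsum : ∑ j, L ii j * v j
        = L ii im * v im + L ii ii * v ii + L ii ip * v ip := by
      rw [← Finset.sum_subset (Finset.subset_univ ({im, ii, ip} : Finset (Fin n)))]
      · rw [Finset.sum_insert (by simp [hmi, hmp]), Finset.sum_pair hip]
        ring
      · intro x _ hx
        simp only [Finset.mem_insert, Finset.mem_singleton, not_or] at hx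
        have hm : (x : ℕ) ≠ i - 1 := fun h => hx.1 (Fin.ext (by simp [im, h]))
        have h0 : (x : ℕ) ≠ i := fun h => hx.2.1 (Fin.ext (by simp [ii, h]))
        have hp : (x : ℕ) ≠ i + 1 := fun h => hx.2.2 (Fin.ext (by simp [ip, h]))
        have hx2 : (i : ℕ) + 2 ≤ (x : ℕ) ∨ (x : ℕ) + 2 ≤ (i : ℕ) := by omega
        rw [htri ii x hx2]
        ring
    have key := he ii
    rw [hsum] at key
    have habs1 : |L ii im| = -L ii im := abs_of_nonpos (hneg ii im hmi.symm)
    have habs2 : |L ii ip| = -L ii ip := abs_of_nonpos (hneg ii ip hip)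
    rw [habs1, habs2, inv_div]
    have hvm := hvne im
    have hvi := hvne ii
    field_simp
    nlinarith [key, hv im, hv ii]
  · intro i
    have hfil : (Finset.univ.filter (fun j => j ≠ i)) = Finset.univ.erase i := by
      ext x; simp [Finset.mem_erase, and_comm]
    have hself : ∑ j ∈ Finset.univ.erase i, L i j * v j = lam * v i - L i i * v i := by
      have h := Finset.add_sum_erase Finset.univ (fun j => L i j * v j) (Finset.mem_univ i)
      rw [he i] at h
      have h' : L i i * v i + ∑ j ∈ Finset.univ.erase i, L i j * v j = lam * v i := by
        simpa using h
      linarith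
    have habs : ∀ j ∈ Finset.univ.erase i,
        |(P * L * P⁻¹) i j| = (v i)⁻¹ * (-(L i j)) * v j := by
      intro j hj
      have hji : i ≠ j := (Finset.ne_of_mem_erase hj).symm
      rw [hM i j, abs_mul, abs_mul]
      rw [abs_of_nonneg (le_of_lt (hv j)), abs_of_nonneg (inv_nonneg.mpr (le_of_lt (hv i)))]
      rw [abs_of_nonpos (hneg i j hji)]
    rw [hfil, Finset.sum_congr rfl habs, hM i i]
    have : ∑ j ∈ Finset.univ.erase i, (v i)⁻¹ * (-(L i j)) * v j
        = (v i)⁻¹ * -(∑ j ∈ Finset.univ.erase i, L i j * v j) := by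
      rw [← Finset.sum_neg_distrib, Finset.mul_sum]
      apply Finset.sum_congr rfl
      intro x _; ring
    rw [this, hself]
    have hvi := hvne i
    field_simp
    ring
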